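/- arXiv:2404.04110 — 4 statements merged into one kernel-verified Lean document; each statement's English description precedes it below -/
import Mathlib

section
/- Let γ ≠ 0, g, σ, ε₀ > 0, and let T_k = tanh(k)/k. For positive integers k ≠ l, define E_{k,l} := [σγ²(l² − k²)T_kT_l(T_k − T_l) − ((g + σk²)T_k − (g + σl²)T_l)²] / ((T_k − T_l)²γ²ε₀). If λ*_{k,+}(E₀) = λ*_{l,+}(E₀) (where λ*_{k,+} = (γ/2)T_k + √(γ²T_k²/4 + (g+σk²)T_k − ε₀E₀²), assuming the discriminants are nonnegative), then E₀² = E_{k,l}. -/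
open Real in
lemma tanh_div_strictAntiOn : StrictAntiOn (fun x : ℝ => Real.sinh x / (Real.cosh x * x)) (Set.Ioi 0) := by
  apply strictAntiOn_of_deriv_neg (convex_Ioi 0)
  · apply ContinuousOn.div Real.continuous_sinh.continuousOn
      (Real.continuous_cosh.continuousOn.mul continuousOn_id)
    intro x hx
    exact mul_ne_zero (ne_of_gt (Real.cosh_pos x)) (ne_of_gt hx)
  · intro x hx
    rw [interior_Ioi] at hx
    have hx0 : (0:ℝ) < x := hx
    have hc : (0:ℝ) < Real.cosh x := Real.cosh_pos x
    have hden : Real.cosh x * x ≠ 0 := mul_ne_zero hc.ne' hx0.ne'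
    have hd : HasDerivAt (fun x : ℝ => Real.sinh x / (Real.cosh x * x))
        ((Real.cosh x * (Real.cosh x * x) - Real.sinh x * (Real.sinh x * x + Real.cosh x * 1))
          / (Real.cosh x * x)^2) x :=
      (Real.hasDerivAt_sinh x).div ((Real.hasDerivAt_cosh x).mul (hasDerivAt_id x)) hden
    rw [hd.deriv]
    apply div_neg_of_neg_of_pos
    · have h1 : 2 * x < Real.sinh (2 * x) := Real.self_lt_sinh_iff.mpr (by linarith)
      have h2 : Real.sinh (2 * x) = 2 * Real.sinh x * Real.cosh x := Real.sinh_two_mul x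
      have h3 : Real.cosh x ^ 2 - Real.sinh x ^ 2 = 1 := Real.cosh_sq_sub_sinh_sq x
      nlinarith
    · positivity

theorem resonance_determines_E (γ g σ ε₀ E₀ : ℝ) (hγ : γ ≠ 0) (hg : 0 < g) (hσ : 0 < σ)
    (hε : 0 < ε₀) (k l : ℕ) (hk : 0 < k) (hl : 0 < l) (hkl : k ≠ l)
    (Tk Tl : ℝ) (hTk : Tk = Real.tanh k / k) (hTl : Tl = Real.tanh l / l)
    (hdk : 0 ≤ γ^2 * Tk^2 / 4 + (g + σ * (k:ℝ)^2) * Tk - ε₀ * E₀^2)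
    (hdl : 0 ≤ γ^2 * Tl^2 / 4 + (g + σ * (l:ℝ)^2) * Tl - ε₀ * E₀^2)
    (hres : γ / 2 * Tk + Real.sqrt (γ^2 * Tk^2 / 4 + (g + σ * (k:ℝ)^2) * Tk - ε₀ * E₀^2) =
            γ / 2 * Tl + Real.sqrt (γ^2 * Tl^2 / 4 + (g + σ * (l:ℝ)^2) * Tl - ε₀ * E₀^2)) :
    E₀^2 = (σ * γ^2 * ((l:ℝ)^2 - (k:ℝ)^2) * Tk * Tl * (Tk - Tl)
              - ((g + σ * (k:ℝ)^2) * Tk - (g + σ * (l:ℝ)^2) * Tl)^2) /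
           ((Tk - Tl)^2 * γ^2 * ε₀) := by
  -- Tk ≠ Tl
  have hk0 : (0:ℝ) < (k:ℝ) := by exact_mod_cast hk
  have hl0 : (0:ℝ) < (l:ℝ) := by exact_mod_cast hl
  have hTk' : Tk = Real.sinh k / (Real.cosh k * k) := by
    rw [hTk, Real.tanh_eq_sinh_div_cosh, div_div]
  have hTl' : Tl = Real.sinh l / (Real.cosh l * l) := by
    rw [hTl, Real.tanh_eq_sinh_div_cosh, div_div]
  have hklR : (k:ℝ) ≠ (l:ℝ) := by exact_mod_cast hkl
  have hTkl : Tk ≠ Tl := by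
    rw [hTk', hTl']
    rcases lt_or_gt_of_ne hklR with h | h
    · exact (tanh_div_strictAntiOn hk0 hl0 h).ne'
    · exact (tanh_div_strictAntiOn hl0 hk0 h).ne
  set A := γ^2 * Tk^2 / 4 + (g + σ * (k:ℝ)^2) * Tk - ε₀ * E₀^2 with hA
  set B := γ^2 * Tl^2 / 4 + (g + σ * (l:ℝ)^2) * Tl - ε₀ * E₀^2 with hB
  set c := γ / 2 * (Tl - Tk) with hc
  have hcne : c ≠ 0 := by
    rw [hc]
    apply mul_ne_zero (by simpa using hγ)
    exact sub_ne_zero_of_ne (Ne.symm hTkl)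
  have h3 : Real.sqrt B ^ 2 = B := Real.sq_sqrt hdl
  have h2 : A = (c + Real.sqrt B)^2 := by
    have h1 : Real.sqrt A = c + Real.sqrt B := by rw [hc]; linarith
    rw [← h1, Real.sq_sqrt hdk]
  have e : 2 * c * Real.sqrt B = A - B - c^2 := by nlinarith [h3, h2]
  have hkey : 4 * c^2 * B = (A - B - c^2)^2 := by
    linear_combination (A - B - c^2 + 2 * c * Real.sqrt B) * e - 4 * c^2 * h3
  rw [hA, hB, hc] at hkey
  have hden : (Tk - Tl)^2 * γ^2 * ε₀ ≠ 0 := by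
    apply mul_ne_zero (mul_ne_zero (pow_ne_zero _ (sub_ne_zero_of_ne hTkl)) (pow_ne_zero _ hγ)) hε.ne'
  field_simp
  linear_combination (-1 : ℝ) * hkey
end

section
/- Let γ ≠ 0, g, σ, ε₀ > 0 and T_k = tanh(k)/k. Suppose k, l, m are pairwise distinct positive integers and E₀² = E_{k,l} = E_{k,m}, where E_{k,l} := [σγ²(l² − k²)T_kT_l(T_k − T_l) − ((g + σk²)T_k − (g + σl²)T_l)²]/((T_k − T_l)²γ²ε₀), and suppose the triple resonance λ*_{k,+} = λ*_{l,+} = λ*_{m,+} holds. Then T_l = T_m, which contradicts the strict monotonicity of T; hence no triple resonance λ*_{k,+} = λ*_{l,+} = λ*_{m,+} can occur for distinct k, l, m. Equivalently: the kernel of the linearized operator at a resonant electric field E₀² = E_{k,l} is exactly two-dimensional, spanned by cos(kq) and cos(lq). -/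
open Real

noncomputable def phh (x : ℝ) : ℝ := x * (Real.exp (2*x) + 1) / (Real.exp (2*x) - 1)

lemma tanh_exp (x : ℝ) : Real.tanh x = (Real.exp (2*x) - 1)/(Real.exp (2*x) + 1) := by
  rw [Real.tanh_eq_sinh_div_cosh, Real.sinh_eq, Real.cosh_eq]
  rw [show (2:ℝ)*x = x + x by ring, Real.exp_add, Real.exp_neg]
  have h := Real.exp_ne_zero x
  have h2 := Real.exp_pos x
  field_simp

lemma exp_cubic {x : ℝ} (hx : 0 ≤ x) : 1 + x + x^2/2 + x^3/6 ≤ Real.exp x := by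
  have h := Real.sum_le_exp_of_nonneg hx 4
  simp [Finset.sum_range_succ, Nat.factorial] at h
  linarith

lemma exp_two_gt {x : ℝ} (hx : 0 < x) : 1 < Real.exp (2*x) := by
  have := Real.add_one_lt_exp (x := 2*x) (ne_of_gt (by linarith))
  linarith

lemma phh_eq {x : ℝ} (hx : 0 < x) : phh x = x + 2*x/(Real.exp (2*x) - 1) := by
  have h := exp_two_gt hx
  have h1 : Real.exp (2*x) - 1 ≠ 0 := by linarith
  unfold phh
  rw [div_eq_iff h1, add_mul, div_mul_cancel₀ _ h1]; ring

-- delta x = 2x/(exp(2x)-1) is antitone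
lemma delta_anti {a b : ℝ} (ha : 1 ≤ a) (hab : a < b) :
    2*b/(Real.exp (2*b) - 1) < 2*a/(Real.exp (2*a) - 1) := by
  have ha0 : 0 < a := by linarith
  have hEa := exp_two_gt ha0
  have hEb := exp_two_gt (show (0:ℝ) < b by linarith)
  have hJ : 2*(b-a) + 1 < Real.exp (2*(b-a)) := by
    have := Real.add_one_lt_exp (x := 2*(b-a)) (ne_of_gt (by linarith))
    linarith
  have hmul : Real.exp (2*b) = Real.exp (2*a) * Real.exp (2*(b-a)) := by
    rw [← Real.exp_add]; ring_nf
  have hEa' : 2*a + 1 < Real.exp (2*a) := by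
    have := Real.add_one_lt_exp (x := 2*a) (ne_of_gt (by linarith))
    linarith
  rw [div_lt_div_iff₀ (by linarith) (by linarith)]
  rw [hmul]
  nlinarith [mul_pos (show (0:ℝ) < Real.exp (2*a) - 1 by linarith)
      (show (0:ℝ) < a * Real.exp (2*(b-a)) - b by nlinarith),
    mul_pos ha0 (show (0:ℝ) < Real.exp (2*(b-a)) - 1 by linarith)]

lemma delta_small {a b : ℝ} (ha : 1 ≤ a) (hab : a + 1 ≤ b) :
    2*a/(Real.exp (2*a) - 1) * (2*b+1) < (b-a)*(b-a+1) := by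
  have ha0 : 0 < a := by linarith
  have hEa := exp_two_gt ha0
  have hcube : 1 + 2*a + 2*a^2 + (4/3)*a^3 ≤ Real.exp (2*a) := by
    have := exp_cubic (x := 2*a) (by positivity)
    nlinarith
  rw [div_mul_eq_mul_div, div_lt_iff₀ (by linarith)]
  nlinarith [mul_pos ha0 ha0, sq_nonneg (b-a-1), mul_nonneg (mul_nonneg ha0.le ha0.le) (show (0:ℝ) ≤ b-a-1 by linarith), mul_nonneg (show (0:ℝ) ≤ b-a-1 by linarith) (show (0:ℝ) ≤ a-1 by linarith), mul_nonneg (mul_nonneg (show (0:ℝ) ≤ b-a-1 by linarith) (show (0:ℝ) ≤ b-a-1 by linarith)) ha0.le]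

lemma delta_pos {a : ℝ} (ha : 0 < a) : 0 < 2*a/(Real.exp (2*a) - 1) := by
  have := exp_two_gt ha
  apply div_pos (by linarith) (by linarith)

lemma phh_mono {a b : ℝ} (ha : 1 ≤ a) (hab : a + 1 ≤ b) : phh a < phh b := by
  have ha0 : 0 < a := by linarith
  have hb0 : 0 < b := by linarith
  rw [phh_eq ha0, phh_eq hb0]
  have h1 := delta_small ha hab
  have h2 := delta_pos hb0
  have h3 := delta_pos ha0
  -- delta a < b - a since delta a * (2b+1) < (b-a)(b-a+1) ≤ (b-a)(2b+1)
  have h4 : 2*a/(Real.exp (2*a) - 1) < b - a := by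
    have h5 : (b-a)*(b-a+1) ≤ (b-a)*(2*b+1) := by nlinarith
    have h6 : 2*a/(Real.exp (2*a) - 1) * (2*b+1) < (b-a)*(2*b+1) := by linarith
    exact lt_of_mul_lt_mul_right h6 (by linarith)
  linarith

lemma key_poly {a b c da db dc : ℝ} (ha : 1 ≤ a) (hab : a + 1 ≤ b) (hbc : b + 1 ≤ c)
    (hdb : 0 ≤ db) (hcb : dc < db) (h2 : da*(c+b) < (b-a)*(c-a)) :
    (c^2-b^2)*(a+da) + (b^2-a^2)*(c+dc) < (c^2-a^2)*(b+db) := by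
  nlinarith [mul_lt_mul_of_pos_left h2 (show (0:ℝ) < c - b by linarith),
    mul_lt_mul_of_pos_left hcb (show (0:ℝ) < b^2 - a^2 by nlinarith),
    mul_nonneg (show (0:ℝ) ≤ c^2 - b^2 by nlinarith) hdb]

lemma key {a b c : ℝ} (ha : 1 ≤ a) (hab : a + 1 ≤ b) (hbc : b + 1 ≤ c) :
    (c^2-b^2)*phh a + (b^2-a^2)*phh c < (c^2-a^2)*phh b := by
  have ha0 : 0 < a := by linarith
  have hb0 : 0 < b := by linarith
  have hc0 : 0 < c := by linarith
  rw [phh_eq ha0, phh_eq hb0, phh_eq hc0]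
  have hdb := delta_pos hb0
  have hda := delta_pos ha0
  have hcb := delta_anti (show (1:ℝ) ≤ b by linarith) (show b < c by linarith)
  have hsmall := delta_small ha hab
  set da := 2*a/(Real.exp (2*a) - 1)
  set db := 2*b/(Real.exp (2*b) - 1)
  set dc := 2*c/(Real.exp (2*c) - 1)
  have hstep : (c+b)*(b-a+1) ≤ (2*b+1)*(c-a) := by nlinarith
  have h2 : da*(c+b) < (b-a)*(c-a) := by
    have e1 : da*(c+b)*(b-a+1) ≤ da*((2*b+1)*(c-a)) := by
      have := mul_le_mul_of_nonneg_left hstep hda.le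
      nlinarith
    have e2 : da*((2*b+1)*(c-a)) < (b-a)*(b-a+1)*(c-a) := by
      have := mul_lt_mul_of_pos_right hsmall (show (0:ℝ) < c - a by linarith)
      nlinarith
    have e3 : da*(c+b)*(b-a+1) < (b-a)*(c-a)*(b-a+1) := by nlinarith
    exact lt_of_mul_lt_mul_right e3 (by linarith)
  exact key_poly ha hab hbc hdb.le hcb h2

lemma keyne {k l m : ℕ} (hk : 0 < k) (hl : 0 < l) (hm : 0 < m)
    (hkl : k ≠ l) (hkm : k ≠ m) (hlm : l ≠ m) :
    ((m:ℝ)^2-(l:ℝ)^2)*phh k + ((l:ℝ)^2-(k:ℝ)^2)*phh m + ((k:ℝ)^2-(m:ℝ)^2)*phh l ≠ 0 := by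
  have cast_le : ∀ a b : ℕ, 0 < a → a < b → (1:ℝ) ≤ a ∧ (a:ℝ) + 1 ≤ b := by
    intro a b ha hab
    constructor
    · exact_mod_cast ha
    · have : a + 1 ≤ b := hab
      exact_mod_cast this
  rcases lt_trichotomy k l with h1 | h1 | h1
  · rcases lt_trichotomy l m with h2 | h2 | h2
    · -- k < l < m
      obtain ⟨u1, u2⟩ := cast_le k l hk h1
      obtain ⟨_, u3⟩ := cast_le l m hl h2
      have := key u1 u2 u3
      intro h; nlinarith [this]
    · exact absurd h2 hlm
    · rcases lt_trichotomy k m with h3 | h3 | h3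
      · -- k < m < l
        obtain ⟨u1, u2⟩ := cast_le k m hk h3
        obtain ⟨_, u3⟩ := cast_le m l hm h2
        have := key u1 u2 u3
        intro h; nlinarith [this]
      · exact absurd h3 hkm
      · -- m < k < l
        obtain ⟨u1, u2⟩ := cast_le m k hm h3
        obtain ⟨_, u3⟩ := cast_le k l hk h1
        have := key u1 u2 u3
        intro h; nlinarith [this]
  · exact absurd h1 hkl
  · rcases lt_trichotomy k m with h2 | h2 | h2
    · -- l < k < m
      obtain ⟨u1, u2⟩ := cast_le l k hl h1
      obtain ⟨_, u3⟩ := cast_le k m hk h2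
      have := key u1 u2 u3
      intro h; nlinarith [this]
    · exact absurd h2 hkm
    · rcases lt_trichotomy l m with h3 | h3 | h3
      · -- l < m < k
        obtain ⟨u1, u2⟩ := cast_le l m hl h3
        obtain ⟨_, u3⟩ := cast_le m k hm h2
        have := key u1 u2 u3
        intro h; nlinarith [this]
      · exact absurd h3 hlm
      · -- m < l < k
        obtain ⟨u1, u2⟩ := cast_le m l hm h3
        obtain ⟨_, u3⟩ := cast_le l k hl h1
        have := key u1 u2 u3
        intro h; nlinarith [this]

set_option maxHeartbeats 1600000 in
theorem no_triple_resonance (γ g σ ε₀ E₀ : ℝ) (hγ : γ ≠ 0) (hg : 0 < g) (hσ : 0 < σ)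
    (hε : 0 < ε₀) (k l m : ℕ) (hk : 0 < k) (hl : 0 < l) (hm : 0 < m)
    (hkl : k ≠ l) (hkm : k ≠ m) (hlm : l ≠ m)
    (T : ℕ → ℝ) (hT : ∀ n : ℕ, T n = Real.tanh n / n)
    (E : ℕ → ℕ → ℝ)
    (hE : ∀ i j : ℕ, E i j =
      (σ * γ^2 * ((j:ℝ)^2 - (i:ℝ)^2) * T i * T j * (T i - T j)
          - ((g + σ * (i:ℝ)^2) * T i - (g + σ * (j:ℝ)^2) * T j)^2) /
        ((T i - T j)^2 * γ^2 * ε₀))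
    (hEkl : E₀^2 = E k l) (hEkm : E₀^2 = E k m)
    (lam : ℕ → ℝ)
    (hlam : ∀ n : ℕ, lam n = γ / 2 * T n +
      Real.sqrt (γ^2 * (T n)^2 / 4 + (g + σ * (n:ℝ)^2) * T n - ε₀ * E₀^2))
    (hres : lam k = lam l ∧ lam l = lam m) :
    T l = T m ∧ False := by
  -- basic facts: T n * phh n = 1 and T n > 0
  have hTph : ∀ n : ℕ, 0 < n → T n * phh n = 1 ∧ 0 < T n := by
    intro n hn
    have hn' : (0:ℝ) < n := by exact_mod_cast hn
    have hn0 : (n:ℝ) ≠ 0 := ne_of_gt hn'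
    have hE1 : 1 < Real.exp (2*(n:ℝ)) := exp_two_gt hn'
    have hE2 : Real.exp (2*(n:ℝ)) - 1 ≠ 0 := by linarith
    have hE3 : Real.exp (2*(n:ℝ)) + 1 ≠ 0 := by linarith
    have ht : Real.tanh n = (Real.exp (2*(n:ℝ)) - 1)/(Real.exp (2*(n:ℝ)) + 1) := tanh_exp n
    constructor
    · rw [hT n, ht]; unfold phh; field_simp
    · rw [hT n, ht]
      apply div_pos (div_pos (by linarith) (by linarith)) hn'
  obtain ⟨pk, tk0⟩ := hTph k hk
  obtain ⟨pl, tl0⟩ := hTph l hl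
  obtain ⟨pm, tm0⟩ := hTph m hm
  -- injectivity of T on {k,l,m}
  have hmono : ∀ a b : ℕ, 0 < a → a < b → phh a < phh b := by
    intro a b ha hab
    apply phh_mono
    · exact_mod_cast ha
    · exact_mod_cast hab
  have tne : ∀ a b : ℕ, 0 < a → 0 < b → a ≠ b → 0 < T a → 0 < T b →
      T a * phh a = 1 → T b * phh b = 1 → T a ≠ T b := by
    intro a b ha hb hab ta0 tb0 pa pb h
    have h1 : phh a ≠ phh b := by
      rcases lt_or_gt_of_ne hab with hh | hh
      · exact ne_of_lt (hmono a b ha hh)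
      · exact (ne_of_lt (hmono b a hb hh)).symm
    apply h1
    have e1 : phh a = 1 / T a := by rw [eq_div_iff (ne_of_gt ta0), mul_comm]; exact pa
    have e2 : phh b = 1 / T b := by rw [eq_div_iff (ne_of_gt tb0), mul_comm]; exact pb
    rw [e1, e2, h]
  have tkl : T k ≠ T l := tne k l hk hl hkl tk0 tl0 pk pl
  have tkm : T k ≠ T m := tne k m hk hm hkm tk0 tm0 pk pm
  -- clear denominators in hEkl, hEkm
  have hdkl : ((T k - T l)^2 * γ^2 * ε₀) ≠ 0 := by
    have h5 : T k - T l ≠ 0 := sub_ne_zero.mpr tkl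
    exact mul_ne_zero (mul_ne_zero (pow_ne_zero 2 h5) (pow_ne_zero 2 hγ)) (ne_of_gt hε)
  have hdkm : ((T k - T m)^2 * γ^2 * ε₀) ≠ 0 := by
    have h5 : T k - T m ≠ 0 := sub_ne_zero.mpr tkm
    exact mul_ne_zero (mul_ne_zero (pow_ne_zero 2 h5) (pow_ne_zero 2 hγ)) (ne_of_gt hε)
  rw [hE k l, eq_div_iff hdkl] at hEkl
  rw [hE k m, eq_div_iff hdkm] at hEkm
  -- the discriminants are perfect squares, hence nonnegative
  have hXk : (γ^2*(T k)^2/4 + (g+σ*(k:ℝ)^2)*T k - ε₀*E₀^2) * (4*γ^2*(T k - T l)^2)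
      = (2*((g+σ*(l:ℝ)^2)*T l - (g+σ*(k:ℝ)^2)*T k) - γ^2*(T k)*(T k - T l))^2 := by
    linear_combination (-4) * hEkl
  have hXl : (γ^2*(T l)^2/4 + (g+σ*(l:ℝ)^2)*T l - ε₀*E₀^2) * (4*γ^2*(T k - T l)^2)
      = (2*((g+σ*(l:ℝ)^2)*T l - (g+σ*(k:ℝ)^2)*T k) - γ^2*(T l)*(T k - T l))^2 := by
    linear_combination (-4) * hEkl
  have hXm : (γ^2*(T m)^2/4 + (g+σ*(m:ℝ)^2)*T m - ε₀*E₀^2) * (4*γ^2*(T k - T m)^2)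
      = (2*((g+σ*(m:ℝ)^2)*T m - (g+σ*(k:ℝ)^2)*T k) - γ^2*(T m)*(T k - T m))^2 := by
    linear_combination (-4) * hEkm
  have sqpos : ∀ x : ℝ, x ≠ 0 → 0 < x^2 := by
    intro x hx
    exact (sq_nonneg x).lt_of_ne (Ne.symm (pow_ne_zero 2 hx))
  have h4kl : 0 < 4*γ^2*(T k - T l)^2 := by
    have := sqpos _ (sub_ne_zero.mpr tkl); have := sqpos _ hγ; nlinarith
  have h4km : 0 < 4*γ^2*(T k - T m)^2 := by
    have := sqpos _ (sub_ne_zero.mpr tkm); have := sqpos _ hγ; nlinarith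
  have hXk0 : 0 ≤ γ^2*(T k)^2/4 + (g+σ*(k:ℝ)^2)*T k - ε₀*E₀^2 := by
    rw [(eq_div_iff h4kl.ne').mpr hXk]
    exact div_nonneg (sq_nonneg _) h4kl.le
  have hXl0 : 0 ≤ γ^2*(T l)^2/4 + (g+σ*(l:ℝ)^2)*T l - ε₀*E₀^2 := by
    rw [(eq_div_iff h4kl.ne').mpr hXl]
    exact div_nonneg (sq_nonneg _) h4kl.le
  have hXm0 : 0 ≤ γ^2*(T m)^2/4 + (g+σ*(m:ℝ)^2)*T m - ε₀*E₀^2 := by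
    rw [(eq_div_iff h4km.ne').mpr hXm]
    exact div_nonneg (sq_nonneg _) h4km.le
  -- quadratic equations satisfied by the common eigenvalue
  have eK : (lam k - γ/2*T k)^2 = γ^2*(T k)^2/4 + (g+σ*(k:ℝ)^2)*T k - ε₀*E₀^2 := by
    have h1 : lam k - γ/2*T k = Real.sqrt (γ^2*(T k)^2/4 + (g+σ*(k:ℝ)^2)*T k - ε₀*E₀^2) := by
      rw [hlam k]; ring
    rw [h1, Real.sq_sqrt hXk0]
  have eL : (lam k - γ/2*T l)^2 = γ^2*(T l)^2/4 + (g+σ*(l:ℝ)^2)*T l - ε₀*E₀^2 := by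
    have h1 : lam k - γ/2*T l = Real.sqrt (γ^2*(T l)^2/4 + (g+σ*(l:ℝ)^2)*T l - ε₀*E₀^2) := by
      rw [hres.1, hlam l]; ring
    rw [h1, Real.sq_sqrt hXl0]
  have eM : (lam k - γ/2*T m)^2 = γ^2*(T m)^2/4 + (g+σ*(m:ℝ)^2)*T m - ε₀*E₀^2 := by
    have h1 : lam k - γ/2*T m = Real.sqrt (γ^2*(T m)^2/4 + (g+σ*(m:ℝ)^2)*T m - ε₀*E₀^2) := by
      rw [hres.1, hres.2, hlam m]; ring
    rw [h1, Real.sq_sqrt hXm0]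
  -- the collinearity relation
  have hsD : σ * (((m:ℝ)^2-(l:ℝ)^2)*(T l)*(T m) + ((l:ℝ)^2-(k:ℝ)^2)*(T k)*(T l)
      + ((k:ℝ)^2-(m:ℝ)^2)*(T k)*(T m)) = 0 := by
    linear_combination (T l - T m) * eK + (T m - T k) * eL + (T k - T l) * eM
  have hD : ((m:ℝ)^2-(l:ℝ)^2)*(T l)*(T m) + ((l:ℝ)^2-(k:ℝ)^2)*(T k)*(T l)
      + ((k:ℝ)^2-(m:ℝ)^2)*(T k)*(T m) = 0 := by
    rcases mul_eq_zero.mp hsD with h | h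
    · exact absurd h (ne_of_gt hσ)
    · exact h
  -- translate into the phh form
  have hfin : ((m:ℝ)^2-(l:ℝ)^2)*phh k + ((l:ℝ)^2-(k:ℝ)^2)*phh m + ((k:ℝ)^2-(m:ℝ)^2)*phh l = 0 := by
    linear_combination (phh k*phh l*phh m) * hD
      - ((m:ℝ)^2-(l:ℝ)^2)*phh k*(T m*phh m) * pl - ((m:ℝ)^2-(l:ℝ)^2)*phh k * pm
      - ((l:ℝ)^2-(k:ℝ)^2)*phh m*(T l*phh l) * pk - ((l:ℝ)^2-(k:ℝ)^2)*phh m * pl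
      - ((k:ℝ)^2-(m:ℝ)^2)*phh l*(T m*phh m) * pk - ((k:ℝ)^2-(m:ℝ)^2)*phh l * pm
  exact ((keyne hk hl hm hkl hkm hlm) hfin).elim
end

section
/- Let T_k = tanh(k)/k, γ ≠ 0, ε₀ > 0, E₀* > 0, and k ≠ l positive integers. Then the 2×2 determinant | a₁ b₁ ; a₂ b₂ | with a₁ = −(2k/tanh k)(2λ* − γtanh(k)/k), b₁ = −(4k/tanh k)ε₀E₀*, a₂ = −(2l/tanh l)(2λ* − γtanh(l)/l), b₂ = −(4l/tanh l)ε₀E₀*, where λ* is a common root of both dispersion quadratics (λ*² − γT_jλ* + ε₀E₀*² − (g+σj²)T_j = 0 for j = k and j = l), equals 8γε₀E₀*(T_l − T_k)/(T_kT_l), which is nonzero. -/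
open Real Set

lemma tanh_hasDerivAt (x : ℝ) : HasDerivAt Real.tanh (1 / Real.cosh x ^ 2) x := by
  have h := (Real.hasDerivAt_sinh x).div (Real.hasDerivAt_cosh x) (Real.cosh_pos x).ne'
  have e : (Real.cosh x * Real.cosh x - Real.sinh x * Real.sinh x) / Real.cosh x ^ 2
      = 1 / Real.cosh x ^ 2 := by
    rw [show Real.cosh x * Real.cosh x - Real.sinh x * Real.sinh x
      = Real.cosh x ^ 2 - Real.sinh x ^ 2 by ring, Real.cosh_sq_sub_sinh_sq]
  rw [← e]
  exact h.congr_of_eventuallyEq (by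
    filter_upwards with y; rw [Real.tanh_eq_sinh_div_cosh, Pi.div_apply])

lemma my_continuous_tanh : Continuous Real.tanh :=
  continuous_iff_continuousAt.mpr fun x => (tanh_hasDerivAt x).continuousAt

lemma tanh_pos' {x : ℝ} (hx : 0 < x) : 0 < Real.tanh x := by
  rw [Real.tanh_eq_sinh_div_cosh]
  exact div_pos (Real.sinh_pos_iff.mpr hx) (Real.cosh_pos x)

lemma tanh_div_strictAnti : StrictAntiOn (fun x : ℝ => Real.tanh x / x) (Ioi 0) := by
  apply strictAntiOn_of_deriv_neg (convex_Ioi 0)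
  · exact my_continuous_tanh.continuousOn.div continuousOn_id (fun x hx => ne_of_gt hx)
  · intro x hx
    rw [interior_Ioi, mem_Ioi] at hx
    have hd : HasDerivAt (fun x : ℝ => Real.tanh x / x)
        ((1 / Real.cosh x ^ 2 * x - Real.tanh x * 1) / x ^ 2) x :=
      (tanh_hasDerivAt x).div (hasDerivAt_id x) hx.ne'
    rw [hd.deriv]
    apply div_neg_of_neg_of_pos _ (by positivity)
    have hc := Real.cosh_pos x
    have h1 : x < Real.sinh x * Real.cosh x :=
      lt_of_lt_of_le (Real.self_lt_sinh_iff.mpr hx)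
        (le_mul_of_one_le_right (Real.sinh_pos_iff.mpr hx).le (Real.one_le_cosh x))
    rw [Real.tanh_eq_sinh_div_cosh, sub_neg, div_mul_eq_mul_div, one_mul, mul_one, div_lt_div_iff₀ (by positivity) hc]
    nlinarith


theorem nondegeneracy_determinant (γ g σ ε₀ E₀ lam : ℝ) (hγ : γ ≠ 0) (hε : 0 < ε₀)
    (hE : 0 < E₀) (k l : ℕ) (hk : 0 < k) (hl : 0 < l) (hkl : k ≠ l)
    (Tk Tl : ℝ) (hTk : Tk = Real.tanh k / k) (hTl : Tl = Real.tanh l / l)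
    (hrootk : lam^2 - γ * Tk * lam + ε₀ * E₀^2 - (g + σ * (k:ℝ)^2) * Tk = 0)
    (hrootl : lam^2 - γ * Tl * lam + ε₀ * E₀^2 - (g + σ * (l:ℝ)^2) * Tl = 0) :
    (-(2 * k / Real.tanh k) * (2 * lam - γ * Real.tanh k / k)) *
        (-(4 * l / Real.tanh l) * ε₀ * E₀) -
      (-(2 * l / Real.tanh l) * (2 * lam - γ * Real.tanh l / l)) *
        (-(4 * k / Real.tanh k) * ε₀ * E₀) =
      8 * γ * ε₀ * E₀ * (Tl - Tk) / (Tk * Tl) ∧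
    8 * γ * ε₀ * E₀ * (Tl - Tk) / (Tk * Tl) ≠ 0 := by
  have hk0 : (0:ℝ) < (k:ℝ) := by exact_mod_cast hk
  have hl0 : (0:ℝ) < (l:ℝ) := by exact_mod_cast hl
  have htk : 0 < Real.tanh k := tanh_pos' hk0
  have htl : 0 < Real.tanh l := tanh_pos' hl0
  have hTkpos : 0 < Tk := by rw [hTk]; positivity
  have hTlpos : 0 < Tl := by rw [hTl]; positivity
  have hne : Tk ≠ Tl := by
    rcases hkl.lt_or_gt with h | h
    · have := tanh_div_strictAnti (mem_Ioi.mpr hk0) (mem_Ioi.mpr hl0)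
        (by exact_mod_cast h)
      simp only at this; rw [hTk, hTl]; exact this.ne'
    · have := tanh_div_strictAnti (mem_Ioi.mpr hl0) (mem_Ioi.mpr hk0)
        (by exact_mod_cast h)
      simp only at this; rw [hTk, hTl]; exact this.ne
  constructor
  · rw [hTk, hTl]
    field_simp
    ring
  · apply div_ne_zero
    · have : Tl - Tk ≠ 0 := sub_ne_zero.mpr (Ne.symm hne)
      positivity
    · positivity
end

section
/- Let k be a positive integer, T_k = tanh(k)/k, σ > 0, g > 0, ε₀ > 0, E₀* ≥ 0, and let λ* := λ*_{k,+} = √((g+σk²)T_k − ε₀E₀*²) (the positive root in the irrotational case γ = 0), assuming (g+σk²)T_k > ε₀E₀*². Then the quantity M₃ := −3k²(λ*² + ε₀E₀*²) − 18(λ*² + ε₀E₀*²) − (9/2)k⁴σ + 3k²λ*·λ*(T_k−1)/T_k + 27λ*·λ*(T_k−1)/T_k − 3k²ε₀E₀*²(1−T_k)/T_k − 27ε₀E₀*²(1−T_k)/T_k − 3(λ*(T_k−1)/T_k)² − 3ε₀((1−T_k)/T_k)²E₀*² is strictly negative. -/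
theorem cubic_term_negative (k : ℕ) (hk : 0 < k) (σ g ε₀ E₀ : ℝ)
    (hσ : 0 < σ) (hg : 0 < g) (hε : 0 < ε₀) (hE : 0 ≤ E₀)
    (Tk : ℝ) (hTk : Tk = Real.tanh k / k)
    (hdisc : (g + σ * (k:ℝ)^2) * Tk > ε₀ * E₀^2)
    (lam : ℝ) (hlam : lam = Real.sqrt ((g + σ * (k:ℝ)^2) * Tk - ε₀ * E₀^2)) :
    -3 * (k:ℝ)^2 * (lam^2 + ε₀ * E₀^2) - 18 * (lam^2 + ε₀ * E₀^2) - 9/2 * (k:ℝ)^4 * σ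
      + 3 * (k:ℝ)^2 * lam * (lam * (Tk - 1) / Tk) + 27 * lam * (lam * (Tk - 1) / Tk)
      - 3 * (k:ℝ)^2 * ε₀ * E₀^2 * ((1 - Tk) / Tk) - 27 * ε₀ * E₀^2 * ((1 - Tk) / Tk)
      - 3 * (lam * (Tk - 1) / Tk)^2 - 3 * ε₀ * ((1 - Tk) / Tk)^2 * E₀^2 < 0 := by
  have hk1 : (1:ℝ) ≤ (k:ℝ) := by exact_mod_cast hk
  have hkpos : (0:ℝ) < (k:ℝ) := by linarith
  have htpos : 0 < Real.tanh (k:ℝ) := by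
    rw [Real.tanh_eq_sinh_div_cosh]
    exact div_pos (by positivity) (Real.cosh_pos _)
  have htlt : Real.tanh (k:ℝ) < (k:ℝ) := by
    have h1 : Real.tanh (k:ℝ) < 1 := by
      rw [Real.tanh_eq_sinh_div_cosh]
      rw [div_lt_one (Real.cosh_pos _)]
      exact Real.sinh_lt_cosh _
    linarith
  have hT0 : 0 < Tk := by rw [hTk]; positivity
  have hT1 : Tk < 1 := by
    rw [hTk, div_lt_one hkpos]; exact htlt
  have hu : 0 ≤ (1 - Tk) / Tk := div_nonneg (by linarith) hT0.le
  have hlamnn : 0 ≤ lam := hlam ▸ Real.sqrt_nonneg _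
  have hlam2 : lam ^ 2 = (g + σ * (k:ℝ)^2) * Tk - ε₀ * E₀^2 := by
    rw [hlam, sq, Real.mul_self_sqrt (by linarith)]
  have heq : ∀ a : ℝ, a * (Tk - 1) / Tk = -(a * ((1 - Tk) / Tk)) := by
    intro a; field_simp; ring
  rw [heq]
  have hE2 : 0 ≤ ε₀ * E₀^2 := by positivity
  have hkσ : 0 < (k:ℝ)^4 * σ := by positivity
  nlinarith [mul_nonneg (mul_nonneg hlamnn hlamnn) hu, mul_nonneg hE2 hu,
    sq_nonneg (lam * ((1 - Tk) / Tk)), mul_nonneg hE2 (sq_nonneg ((1 - Tk) / Tk)),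
    sq_nonneg lam, mul_nonneg (mul_nonneg (mul_nonneg hlamnn hlamnn) hu) (sq_nonneg (k:ℝ)),
    mul_nonneg (mul_nonneg hE2 hu) (sq_nonneg (k:ℝ)),
    mul_nonneg hE2 (sq_nonneg (k:ℝ)), mul_nonneg (sq_nonneg lam) (sq_nonneg (k:ℝ))]
end
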